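/- Liouville's formula for quaternionic systems: let A : ℝ → ℍ^{n×n} be continuous and let M be a fundamental matrix of ẋ = A(t)x. Then for all t, t₀ ∈ ℝ, det(χ_{M(t)}) = exp(2·∫_{t₀}^{t} Re(tr A(τ)) dτ) · det(χ_{M(t₀)}), where the determinants are taken in ℂ and the exponential factor is real. -/

import Mathlib

open Matrix Polynomial
open scoped Quaternion

noncomputable section

/-- The two complex components of a quaternion: `q = c1 q + (c2 q) * j`,
identifying `ℂ` with the real span of `1` and `i` in `ℍ`. -/
def Quaternion.c1 (q : ℍ[ℝ]) : ℂ := ⟨q.re, q.imI⟩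

def Quaternion.c2 (q : ℍ[ℝ]) : ℂ := ⟨q.imJ, q.imK⟩

/-- The embedding of `ℂ` into `ℍ` as the real span of `1` and `i`. -/
def Complex.toQuat (z : ℂ) : ℍ[ℝ] := ⟨z.re, z.im, 0, 0⟩

/-- The complex adjoint matrix `χ_A` of a quaternion matrix `A = A₁ + A₂·j`:
the block matrix `[[A₁, A₂], [-conj A₂, conj A₁]]`. -/
def chiMat {n : ℕ} (A : Matrix (Fin n) (Fin n) ℍ[ℝ]) :
    Matrix (Fin n ⊕ Fin n) (Fin n ⊕ Fin n) ℂ :=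
  Matrix.fromBlocks (A.map Quaternion.c1) (A.map Quaternion.c2)
    ((-(A.map Quaternion.c2)).map (starRingEnd ℂ)) ((A.map Quaternion.c1).map (starRingEnd ℂ))

/-- `ρ` is a standard eigenvalue of the quaternion matrix `A`: an eigenvalue of the
complex adjoint matrix `χ_A` with nonnegative imaginary part. -/
def IsStdEigenvalue {n : ℕ} (A : Matrix (Fin n) (Fin n) ℍ[ℝ]) (ρ : ℂ) : Prop :=
  (chiMat A).charpoly.IsRoot ρ ∧ 0 ≤ ρ.im

/-- `s` is the multiset of standard eigenvalues of `A` counted with multiplicity: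
it has `n` elements, all with nonnegative imaginary part, and the characteristic
polynomial of `χ_A` is `∏_{z ∈ s} (X - z)·(X - conj z)`. -/
def IsStdEigs {n : ℕ} (A : Matrix (Fin n) (Fin n) ℍ[ℝ]) (s : Multiset ℂ) : Prop :=
  Multiset.card s = n ∧ (∀ z ∈ s, 0 ≤ z.im) ∧
    (chiMat A).charpoly =
      (s.map (fun z => (X - C z) * (X - C (starRingEnd ℂ z)))).prod

/-- `x : ℝ → ℍ^n` is a solution of the linear quaternionic system `ẋ = A(t)x`. -/
def IsSol {n : ℕ} (A : ℝ → Matrix (Fin n) (Fin n) ℍ[ℝ]) (x : ℝ → Fin n → ℍ[ℝ]) : Prop :=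
  ∀ t : ℝ, HasDerivAt x ((A t).mulVec (x t)) t

/-- The norm `‖x‖ = Σ_k |x_k|` on `ℍ^n`. -/
def vecNorm {n : ℕ} (x : Fin n → ℍ[ℝ]) : ℝ := ∑ k, ‖x k‖

/-- The norm `‖A‖ = Σ_{i,j} |a_{ij}|` on `ℍ^{n×n}`. -/
def matNorm {n : ℕ} (A : Matrix (Fin n) (Fin n) ℍ[ℝ]) : ℝ := ∑ i, ∑ j, ‖A i j‖

/-- Stability (in the sense of Lyapunov) of the system `ẋ = A(t)x` at `t₀`. -/
def StableAt {n : ℕ} (A : ℝ → Matrix (Fin n) (Fin n) ℍ[ℝ]) (t₀ : ℝ) : Prop :=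
  ∀ ε > (0:ℝ), ∃ δ > (0:ℝ), ∀ x : ℝ → Fin n → ℍ[ℝ], IsSol A x →
    vecNorm (x t₀) < δ → ∀ t ≥ t₀, vecNorm (x t) < ε

/-- Asymptotic stability of the system `ẋ = A(t)x` at `t₀`. -/
def AsympStableAt {n : ℕ} (A : ℝ → Matrix (Fin n) (Fin n) ℍ[ℝ]) (t₀ : ℝ) : Prop :=
  StableAt A t₀ ∧ ∃ δ > (0:ℝ), ∀ x : ℝ → Fin n → ℍ[ℝ], IsSol A x →
    vecNorm (x t₀) < δ →
      Filter.Tendsto (fun t => vecNorm (x t)) Filter.atTop (nhds 0)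

/-- `M` is a fundamental matrix of `ẋ = A(t)x`: entrywise `M'(t) = A(t)·M(t)`
and `M(t)` is invertible for every `t`. -/
def IsFundamental {n : ℕ} (A M : ℝ → Matrix (Fin n) (Fin n) ℍ[ℝ]) : Prop :=
  (∀ (t : ℝ) (i j : Fin n), HasDerivAt (fun s => M s i j) ((A t * M t) i j) t) ∧
    ∀ t : ℝ, IsUnit (M t)


namespace QLiou


@[simp] lemma c1_re (q : ℍ[ℝ]) : q.c1.re = q.re := rfl
@[simp] lemma c1_im (q : ℍ[ℝ]) : q.c1.im = q.imI := rfl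
@[simp] lemma c2_re (q : ℍ[ℝ]) : q.c2.re = q.imJ := rfl
@[simp] lemma c2_im (q : ℍ[ℝ]) : q.c2.im = q.imK := rfl

lemma c1_add_conj (q : ℍ[ℝ]) : q.c1 + (starRingEnd ℂ) q.c1 = (2 * q.re : ℝ) := by
  apply Complex.ext <;> simp <;> ring

/-- `c1` as a continuous ℝ-linear map. -/
def c1L : ℍ[ℝ] →L[ℝ] ℂ :=
  { toLinearMap :=
      { toFun := Quaternion.c1
        map_add' := fun a b => by apply Complex.ext <;> simp
        map_smul' := fun r a => by apply Complex.ext <;> simp [Complex.real_smul] }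
    cont := Complex.equivRealProdCLM.symm.continuous.comp
      (Quaternion.continuous_re.prodMk Quaternion.continuous_imI) }

def c2L : ℍ[ℝ] →L[ℝ] ℂ :=
  { toLinearMap :=
      { toFun := Quaternion.c2
        map_add' := fun a b => by apply Complex.ext <;> simp
        map_smul' := fun r a => by apply Complex.ext <;> simp [Complex.real_smul] }
    cont := Complex.equivRealProdCLM.symm.continuous.comp
      (Quaternion.continuous_imJ.prodMk Quaternion.continuous_imK) }

@[simp] lemma c1L_apply (q : ℍ[ℝ]) : c1L q = q.c1 := rfl
@[simp] lemma c2L_apply (q : ℍ[ℝ]) : c2L q = q.c2 := rfl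

lemma HasDerivAt.c1 {f : ℝ → ℍ[ℝ]} {f' : ℍ[ℝ]} {t : ℝ} (h : HasDerivAt f f' t) :
    HasDerivAt (fun s => (f s).c1) f'.c1 t :=
  (c1L.hasFDerivAt.comp_hasDerivAt t h)

lemma HasDerivAt.c2 {f : ℝ → ℍ[ℝ]} {f' : ℍ[ℝ]} {t : ℝ} (h : HasDerivAt f f' t) :
    HasDerivAt (fun s => (f s).c2) f'.c2 t :=
  (c2L.hasFDerivAt.comp_hasDerivAt t h)

lemma HasDerivAt.cconj {f : ℝ → ℂ} {f' : ℂ} {t : ℝ} (h : HasDerivAt f f' t) :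
    HasDerivAt (fun s => (starRingEnd ℂ) (f s)) ((starRingEnd ℂ) f') t :=
  (Complex.conjCLE.toContinuousLinearMap.hasFDerivAt.comp_hasDerivAt t h)


variable {ι : Type*} [Fintype ι] [DecidableEq ι]

/-- The determinant as a continuous multilinear map in the rows. -/
def detCML (ι : Type*) [Fintype ι] [DecidableEq ι] :
    ContinuousMultilinearMap ℂ (fun _ : ι => ι → ℂ) ℂ :=
  MultilinearMap.mkContinuous
    (Matrix.detRowAlternating : (ι → ℂ) [⋀^ι]→ₗ[ℂ] ℂ).toMultilinearMap
    (Nat.factorial (Fintype.card ι)) (by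
      intro m
      have : Matrix.detRowAlternating (Matrix.of m) =
          ∑ σ : Equiv.Perm ι, Equiv.Perm.sign σ • ∏ i, m (σ i) i := Matrix.det_apply _
      show ‖Matrix.detRowAlternating (Matrix.of m)‖ ≤ _
      rw [this]
      calc ‖∑ σ : Equiv.Perm ι, Equiv.Perm.sign σ • ∏ i, m (σ i) i‖
          ≤ ∑ σ : Equiv.Perm ι, ‖Equiv.Perm.sign σ • ∏ i, m (σ i) i‖ := norm_sum_le _ _
        _ ≤ ∑ _σ : Equiv.Perm ι, ∏ i, ‖m i‖ := by
            apply Finset.sum_le_sum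
            intro σ _
            have h1 : ‖Equiv.Perm.sign σ • ∏ i, m (σ i) i‖ = ‖∏ i, m (σ i) i‖ := by
              rcases Int.units_eq_one_or (Equiv.Perm.sign σ) with h | h <;>
                simp [h, Units.smul_def]
            rw [h1]
            calc ‖∏ i, m (σ i) i‖ = ∏ i, ‖m (σ i) i‖ := by rw [norm_prod]
              _ ≤ ∏ i, ‖m (σ i)‖ := by
                  apply Finset.prod_le_prod (fun _ _ => norm_nonneg _)
                  intro i _
                  exact norm_le_pi_norm (m (σ i)) i
              _ = ∏ i, ‖m i‖ := Equiv.prod_comp σ (fun i => ‖m i‖)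
        _ = (Nat.factorial (Fintype.card ι)) * ∏ i, ‖m i‖ := by
            rw [Finset.sum_const, Finset.card_univ, Fintype.card_perm, nsmul_eq_mul]
      )

@[simp] lemma detCML_apply (m : ι → ι → ℂ) : detCML ι m = (Matrix.of m).det := rfl

lemma hasDerivAt_det {N : ℝ → Matrix ι ι ℂ} {N' : Matrix ι ι ℂ} {t : ℝ}
    (h : ∀ i j, HasDerivAt (fun s => N s i j) (N' i j) t) :
    HasDerivAt (fun s => (N s).det)
      (∑ i, ((N t).updateRow i (N' i)).det) t := by
  have hrows : HasDerivAt (fun s => (fun i => N s i)) (fun i => N' i) t :=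
    hasDerivAt_pi.2 fun i => hasDerivAt_pi.2 fun j => h i j
  have hd := (((detCML ι).hasFDerivAt (x := fun i => N t i)).restrictScalars ℝ).comp_hasDerivAt t hrows
  have he : (((detCML ι).linearDeriv fun i => N t i).restrictScalars ℝ) (fun i => N' i) =
      ∑ i, ((N t).updateRow i (N' i)).det := by
    rw [ContinuousLinearMap.coe_restrictScalars', ContinuousMultilinearMap.linearDeriv_apply]
    refine Finset.sum_congr rfl fun i _ => ?_
    rw [detCML_apply]
    rfl
  rw [he] at hd
  exact hd

lemma sum_det_updateRow (B N : Matrix ι ι ℂ) :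
    ∑ i, (N.updateRow i ((B * N) i)).det = Matrix.trace B * N.det := by
  have : ∀ i, (N.updateRow i ((B * N) i)).det = B i i * N.det := by
    intro i
    have h : (B * N) i = ∑ k, B i k • N k := by
      ext j; simp [Matrix.mul_apply]
    rw [h, Matrix.det_updateRow_sum, smul_eq_mul]
  simp only [this, Matrix.trace, Matrix.diag, ← Finset.sum_mul]



lemma c1_mul (q r : ℍ[ℝ]) :
    (q * r).c1 = q.c1 * r.c1 - q.c2 * (starRingEnd ℂ) r.c2 := by
  apply Complex.ext <;>
    simp [Quaternion.c1, Quaternion.c2, Quaternion.re_mul, Quaternion.imI_mul,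
      Complex.mul_re, Complex.mul_im] <;> ring

lemma c2_mul (q r : ℍ[ℝ]) :
    (q * r).c2 = q.c1 * r.c2 + q.c2 * (starRingEnd ℂ) r.c1 := by
  apply Complex.ext <;>
    simp [Quaternion.c1, Quaternion.c2, Quaternion.imJ_mul, Quaternion.imK_mul,
      Complex.mul_re, Complex.mul_im] <;> ring

lemma c1_sum {α : Type*} (s : Finset α) (f : α → ℍ[ℝ]) :
    (∑ a ∈ s, f a).c1 = ∑ a ∈ s, (f a).c1 := by
  induction s using Finset.cons_induction with
  | empty => apply Complex.ext <;> simp [Quaternion.c1]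
  | cons a s ha ih =>
      rw [Finset.sum_cons, Finset.sum_cons, ← ih]
      apply Complex.ext <;> simp [Quaternion.c1]

lemma c2_sum {α : Type*} (s : Finset α) (f : α → ℍ[ℝ]) :
    (∑ a ∈ s, f a).c2 = ∑ a ∈ s, (f a).c2 := by
  induction s using Finset.cons_induction with
  | empty => apply Complex.ext <;> simp [Quaternion.c2]
  | cons a s ha ih =>
      rw [Finset.sum_cons, Finset.sum_cons, ← ih]
      apply Complex.ext <;> simp [Quaternion.c2]

lemma chiMat_mul {n : ℕ} (X Y : Matrix (Fin n) (Fin n) ℍ[ℝ]) :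
    chiMat (X * Y) = chiMat X * chiMat Y := by
  unfold chiMat
  rw [Matrix.fromBlocks_multiply]
  refine Matrix.ext fun a b => ?_
  obtain i | i := a <;> obtain j | j := b <;>
    simp only [Matrix.fromBlocks_apply₁₁, Matrix.fromBlocks_apply₁₂,
      Matrix.fromBlocks_apply₂₁, Matrix.fromBlocks_apply₂₂, Matrix.map_apply,
      Matrix.add_apply, Matrix.mul_apply, Matrix.neg_apply, map_neg, map_sum,
      Matrix.mul_apply]
  · rw [c1_sum, ← Finset.sum_add_distrib]
    exact Finset.sum_congr rfl fun k _ => by rw [c1_mul]; ring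
  · rw [c2_sum, ← Finset.sum_add_distrib]
    exact Finset.sum_congr rfl fun k _ => by rw [c2_mul]
  · rw [c2_sum, map_sum, ← Finset.sum_neg_distrib, ← Finset.sum_add_distrib]
    refine Finset.sum_congr rfl fun k _ => ?_
    rw [c2_mul]
    simp only [map_add, _root_.map_mul, Complex.conj_conj]
    ring
  · rw [c1_sum, map_sum, ← Finset.sum_add_distrib]
    refine Finset.sum_congr rfl fun k _ => ?_
    rw [c1_mul]
    simp only [map_sub, _root_.map_mul, Complex.conj_conj]
    ring

lemma trace_chiMat {n : ℕ} (X : Matrix (Fin n) (Fin n) ℍ[ℝ]) :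
    Matrix.trace (chiMat X) = ((2 * (Matrix.trace X).re : ℝ) : ℂ) := by
  unfold chiMat
  have hfb : ∀ (A B C D : Matrix (Fin n) (Fin n) ℂ),
      Matrix.trace (Matrix.fromBlocks A B C D) = Matrix.trace A + Matrix.trace D := by
    intro A B C D
    simp [Matrix.trace, Fintype.sum_sum_type, Matrix.diag]
  rw [hfb]
  have h1 : Matrix.trace (X.map Quaternion.c1) = ∑ i, (X i i).c1 := rfl
  have h2 : Matrix.trace ((X.map Quaternion.c1).map (starRingEnd ℂ)) =
      ∑ i, (starRingEnd ℂ) (X i i).c1 := rfl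
  rw [h1, h2, ← Finset.sum_add_distrib]
  have htr : (Matrix.trace X).re = ∑ i, (X i i).re := by
    rw [Matrix.trace]
    induction (Finset.univ : Finset (Fin n)) using Finset.cons_induction with
    | empty => simp
    | cons a s ha ih =>
        rw [Finset.sum_cons, Finset.sum_cons, Quaternion.re_add, ih]
        rfl
  rw [htr]
  push_cast
  rw [Finset.mul_sum]
  refine Finset.sum_congr rfl fun i _ => ?_
  apply Complex.ext <;> simp [Quaternion.c1] <;> ring


end QLiou

namespace QLiou

lemma hasDerivAt_chiMat {n : ℕ} {M : ℝ → Matrix (Fin n) (Fin n) ℍ[ℝ]}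
    {M' : Matrix (Fin n) (Fin n) ℍ[ℝ]} {t : ℝ}
    (h : ∀ i j, HasDerivAt (fun s => M s i j) (M' i j) t) :
    ∀ a b, HasDerivAt (fun s => chiMat (M s) a b) (chiMat M' a b) t := by
  rintro (i | i) (j | j) <;>
    simp only [chiMat, Matrix.fromBlocks_apply₁₁, Matrix.fromBlocks_apply₁₂,
      Matrix.fromBlocks_apply₂₁, Matrix.fromBlocks_apply₂₂, Matrix.map_apply,
      Matrix.neg_apply]
  · exact HasDerivAt.c1 (h i j)
  · exact HasDerivAt.c2 (h i j)
  · exact HasDerivAt.cconj (HasDerivAt.neg (HasDerivAt.c2 (h i j)))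
  · exact HasDerivAt.cconj (HasDerivAt.c1 (h i j))

end QLiou

theorem stmt13 {n : ℕ} (A M : ℝ → Matrix (Fin n) (Fin n) ℍ[ℝ]) (hA : Continuous A)
    (hM : IsFundamental A M) (t t₀ : ℝ) :
    (chiMat (M t)).det =
      (Real.exp (2 * ∫ τ in t₀..t, (Matrix.trace (A τ)).re) : ℂ) * (chiMat (M t₀)).det := by
  classical
  set c : ℝ → ℝ := fun τ => 2 * (Matrix.trace (A τ)).re with hc_def
  have hc : Continuous c := by
    apply Continuous.mul continuous_const
    apply Continuous.comp Quaternion.continuous_re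
    exact continuous_finset_sum _ fun i _ =>
      (continuous_apply i).comp ((continuous_apply i).comp hA)
  set u : ℝ → ℝ := fun s => ∫ τ in t₀..s, c τ with hu_def
  have hu : ∀ s, HasDerivAt u (c s) s := fun s =>
    intervalIntegral.integral_hasDerivAt_right (hc.intervalIntegrable _ _)
      (hc.stronglyMeasurableAtFilter _ _) hc.continuousAt
  set g : ℝ → ℂ := fun s => (chiMat (M s)).det with hg_def
  have hg : ∀ s, HasDerivAt g ((c s : ℂ) * g s) s := by
    intro s
    have hrow := QLiou.hasDerivAt_chiMat (M' := A s * M s) (fun i j => hM.1 s i j)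
    have hd := QLiou.hasDerivAt_det (N := fun r => chiMat (M r))
      (N' := chiMat (A s * M s)) (fun i j => hrow i j)
    have heq : (∑ i, ((chiMat (M s)).updateRow i (chiMat (A s * M s) i)).det)
        = (c s : ℂ) * g s := by
      rw [QLiou.chiMat_mul]
      rw [QLiou.sum_det_updateRow, QLiou.trace_chiMat]
    rwa [heq] at hd
  set h : ℝ → ℂ := fun s => (Real.exp (-(u s)) : ℂ) * g s with hh_def
  have hh : ∀ s, HasDerivAt h 0 s := by
    intro s
    have h1 : HasDerivAt (fun r => Real.exp (-(u r))) (Real.exp (-(u s)) * (-(c s))) s :=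
      (hu s).neg.exp
    have h2 := h1.ofReal_comp
    have h3 := h2.mul (hg s)
    refine h3.congr_deriv ?_
    push_cast
    ring
  have hconst : h t = h t₀ :=
    is_const_of_deriv_eq_zero (fun s => (hh s).differentiableAt)
      (fun s => (hh s).deriv) t t₀
  have hu0 : u t₀ = 0 := intervalIntegral.integral_same
  have ht0 : h t₀ = g t₀ := by
    simp only [hh_def, hu0, neg_zero, Real.exp_zero, Complex.ofReal_one, one_mul]
  have key : (Real.exp (-(u t)) : ℂ) * g t = g t₀ := hconst.trans ht0
  have hgt : g t = (Real.exp (u t) : ℂ) * g t₀ := by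
    rw [← key, ← mul_assoc, ← Complex.ofReal_mul, ← Real.exp_add]
    norm_num
  have huint : u t = 2 * ∫ τ in t₀..t, (Matrix.trace (A τ)).re := by
    rw [hu_def, hc_def]
    exact intervalIntegral.integral_const_mul _ _
  rw [huint] at hgt
  exact hgt
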